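/- If $U \subset X$ is open and $E \subset X$ has $\mu(E) = 0$, then $C_{p,q}^s(U) = C_{p,q}^s(U \setminus E)$. -/

import Mathlib

open MeasureTheory ENNReal

variable {X : Type*} [MetricSpace X] [MeasurableSpace X] [OpensMeasurableSpace X]

/-- `(g k)` is a fractional `s`-gradient of `u`. -/
def IsFracGrad (μ : Measure X) (s : ℝ) (u : X → ℝ) (g : ℤ → X → ℝ≥0∞) : Prop :=
  (∀ k, Measurable (g k)) ∧
  ∃ E : Set X, μ E = 0 ∧ ∀ k : ℤ, ∀ x ∉ E, ∀ y ∉ E,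
    (2 : ℝ) ^ (-k - 1) ≤ dist x y → dist x y < (2 : ℝ) ^ (-k) →
      ENNReal.ofReal |u x - u y| ≤ ENNReal.ofReal (dist x y ^ s) * (g k x + g k y)

/-- The `ℓ^q`-norm of a sequence of extended nonnegative reals. -/
noncomputable def ellq (q : ℝ≥0∞) (a : ℤ → ℝ≥0∞) : ℝ≥0∞ :=
  if q = ∞ then ⨆ k, a k else (∑' k, a k ^ q.toReal) ^ (1 / q.toReal)

/-- The `L^p`-norm of an `ℝ≥0∞`-valued function. -/
noncomputable def lpNormE (μ : Measure X) (p : ℝ≥0∞) (f : X → ℝ≥0∞) : ℝ≥0∞ :=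
  if p = ∞ then essSup f μ else (∫⁻ x, f x ^ p.toReal ∂μ) ^ (1 / p.toReal)

/-- The homogeneous Hajłasz–Besov seminorm. -/
noncomputable def besovSemi (μ : Measure X) (s : ℝ) (p q : ℝ≥0∞) (u : X → ℝ) : ℝ≥0∞ :=
  ⨅ (g : ℤ → X → ℝ≥0∞) (_ : IsFracGrad μ s u g), ellq q fun k => lpNormE μ p (g k)

/-- The Hajłasz–Besov (quasi)norm `‖u‖_{L^p} + ‖u‖_{Ṅ^s_{p,q}}`. -/
noncomputable def besovNorm (μ : Measure X) (s : ℝ) (p q : ℝ≥0∞) (u : X → ℝ) : ℝ≥0∞ :=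
  eLpNorm u p μ + besovSemi μ s p q u

/-- `u` belongs to the Hajłasz–Besov space `N^s_{p,q}(X)`. -/
def MemBesov (μ : Measure X) (s : ℝ) (p q : ℝ≥0∞) (u : X → ℝ) : Prop :=
  MemLp u p μ ∧ besovNorm μ s p q u < ⊤

/-- `u` is admissible for the Besov capacity of `E`:
`u ∈ N^s_{p,q}(X)` and `u ≥ 1` on a neighbourhood of `E`. -/
def BesovAdmissible (μ : Measure X) (s : ℝ) (p q : ℝ≥0∞) (E : Set X) (u : X → ℝ) : Prop :=
  MemBesov μ s p q u ∧ ∃ U : Set X, IsOpen U ∧ E ⊆ U ∧ ∀ x ∈ U, 1 ≤ u x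

/-- The Besov capacity `C^s_{p,q}(E)`. -/
noncomputable def besovCapacity (μ : Measure X) (s : ℝ) (p q : ℝ≥0∞) (E : Set X) : ℝ≥0∞ :=
  ⨅ (u : X → ℝ) (_ : BesovAdmissible μ s p q E u), besovNorm μ s p q u ^ p.toReal

lemma isFracGrad_congr_aux {μ : Measure X} {s : ℝ} {u u' : X → ℝ} {g : ℤ → X → ℝ≥0∞}
    (h : u =ᵐ[μ] u') (hg : IsFracGrad μ s u g) : IsFracGrad μ s u' g := by
  obtain ⟨hm, N, hN, hb⟩ := hg
  refine ⟨hm, N ∪ {x | u x ≠ u' x}, measure_union_null hN h, ?_⟩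
  intro k x hx y hy h1 h2
  simp only [Set.mem_union, Set.mem_setOf_eq, not_or, not_not] at hx hy
  rw [← hx.2, ← hy.2]
  exact hb k x hx.1 y hy.1 h1 h2

lemma besovSemi_congr {μ : Measure X} {s : ℝ} {p q : ℝ≥0∞} {u u' : X → ℝ}
    (h : u =ᵐ[μ] u') : besovSemi μ s p q u = besovSemi μ s p q u' := by
  apply le_antisymm <;>
    exact le_iInf₂ fun g hg => iInf₂_le g (isFracGrad_congr_aux (by filter_upwards [h] with x hx; simp [hx]) hg)

lemma besovNorm_congr {μ : Measure X} {s : ℝ} {p q : ℝ≥0∞} {u u' : X → ℝ}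
    (h : u =ᵐ[μ] u') : besovNorm μ s p q u = besovNorm μ s p q u' := by
  unfold besovNorm
  rw [eLpNorm_congr_ae h, besovSemi_congr h]

theorem besovCapacity_diff_null (μ : Measure X) [IsUnifLocDoublingMeasure μ]
    (s : ℝ) (hs : 0 < s) (p q : ℝ≥0∞) (hp : 0 < p) (hq : 0 < q)
    (U : Set X) (hU : IsOpen U) (E : Set X) (hE : μ E = 0) :
    besovCapacity μ s p q U = besovCapacity μ s p q (U \ E) := by
  classical
  apply le_antisymm
  · -- capacity U ≤ capacity (U \ E): modify admissible u on a null set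
    refine le_iInf₂ fun u hu => ?_
    obtain ⟨⟨hmem, hnorm⟩, V, hVopen, hVsub, hVge⟩ := hu
    set u' : X → ℝ := fun x => if x ∈ U \ V then 1 else u x with hu'def
    have hae : u =ᵐ[μ] u' := by
      have hnull : μ (U \ V) = 0 := by
        apply measure_mono_null _ hE
        intro x hx
        by_contra hxe
        exact hx.2 (hVsub ⟨hx.1, hxe⟩)
      rw [Filter.EventuallyEq, ae_iff]
      apply measure_mono_null _ hnull
      intro x hx
      simp only [Set.mem_setOf_eq, hu'def] at hx
      by_contra hxm
      simp [hxm] at hx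
    have hadm : BesovAdmissible μ s p q U u' := by
      refine ⟨⟨hmem.ae_eq hae, (besovNorm_congr hae) ▸ hnorm⟩, U ∪ V,
        hU.union hVopen, Set.subset_union_left, ?_⟩
      intro x hx
      rcases Classical.em (x ∈ V) with hxV | hxV
      · have : u' x = u x := by simp [hu'def, hxV]
        rw [this]; exact hVge x hxV
      · have hxU : x ∈ U := hx.resolve_right hxV
        simp [hu'def, hxU, hxV]
    calc besovCapacity μ s p q U ≤ besovNorm μ s p q u' ^ p.toReal :=
          iInf₂_le u' hadm
      _ = besovNorm μ s p q u ^ p.toReal := by rw [besovNorm_congr hae]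
  · -- capacity (U \ E) ≤ capacity U: any admissible u for U works for U \ E
    refine le_iInf₂ fun u hu => iInf₂_le u ?_
    obtain ⟨hmem, V, hVopen, hVsub, hVge⟩ := hu
    exact ⟨hmem, V, hVopen, Set.diff_subset.trans hVsub, hVge⟩
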